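/- For all s > 0 and σ > 0, the integral ∫_σ^∞ exp(-s·cosh(x)) dx is bounded above by (1 + L(s))·exp(-s·cosh(σ)), where L(s) = 1 + |ln(1 - e^{-s})|. -/

import Mathlib

open Real MeasureTheory Set

/-- Quadratic lower bound for cosh. -/
lemma aux_cosh_quad {u : ℝ} (hu : 0 ≤ u) : 1 + u ^ 2 / 2 ≤ Real.cosh u := by
  have h1 : u / 2 ≤ Real.sinh (u / 2) := Real.self_le_sinh_iff.mpr (by linarith)
  have h2 : Real.cosh u = 2 * Real.sinh (u / 2) ^ 2 + 1 := by
    have hc := Real.cosh_two_mul (u / 2)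
    have hq := Real.cosh_sq (u / 2)
    have : 2 * (u / 2) = u := by ring
    rw [this] at hc
    linarith
  nlinarith

lemma aux_cosh_self {u : ℝ} (hu : 0 ≤ u) : u ≤ Real.cosh u := by
  nlinarith [aux_cosh_quad hu]

lemma aux_cosh_exp (u : ℝ) : Real.exp u / 2 ≤ Real.cosh u := by
  rw [Real.cosh_eq]
  have := Real.exp_pos (-u)
  linarith

/-- cosh super-additivity style bound. -/
lemma aux_cosh_shift {a u : ℝ} (ha : 0 ≤ a) (hu : 0 ≤ u) :
    Real.cosh a + (Real.cosh u - 1) ≤ Real.cosh (a + u) := by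
  rw [Real.cosh_add]
  have h1 := Real.one_le_cosh a
  have h2 := Real.one_le_cosh u
  have h3 : 0 ≤ Real.sinh a := Real.sinh_nonneg_iff.mpr ha
  have h4 : 0 ≤ Real.sinh u := Real.sinh_nonneg_iff.mpr hu
  nlinarith

/-- Integrability of the shifted integrand. -/
lemma aux_integrable {s : ℝ} (hs : 0 < s) (a : ℝ) :
    IntegrableOn (fun x => Real.exp (-s * (Real.cosh (x - a) - 1))) (Set.Ioi a) := by
  have hg : IntegrableOn (fun x => Real.exp (s + s * a) * Real.exp (-s * x)) (Set.Ioi a) :=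
    (exp_neg_integrableOn_Ioi a hs).const_mul _
  refine Integrable.mono' hg ?_ ?_
  · exact (Continuous.rexp (by continuity)).aestronglyMeasurable
  · filter_upwards [ae_restrict_mem measurableSet_Ioi] with x hx
    rw [Real.norm_eq_abs, abs_of_pos (Real.exp_pos _), ← Real.exp_add]
    apply Real.exp_le_exp.mpr
    have hxa : (0:ℝ) ≤ x - a := by simp only [Set.mem_Ioi] at hx; linarith
    have := aux_cosh_self hxa
    nlinarith

lemma aux_shift_integral (g : ℝ → ℝ) (a : ℝ) :
    ∫ x in Set.Ioi a, g (x - a) = ∫ u in Set.Ioi (0:ℝ), g u := by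
  rw [← integral_indicator measurableSet_Ioi, ← integral_indicator measurableSet_Ioi,
    ← integral_sub_right_eq_self ((Set.Ioi (0:ℝ)).indicator g) a]
  congr 1
  ext x
  by_cases h : a < x
  · rw [Set.indicator_of_mem (Set.mem_Ioi.mpr h),
      Set.indicator_of_mem (Set.mem_Ioi.mpr (by linarith : (0:ℝ) < x - a))]
  · rw [Set.indicator_of_notMem (by simpa using h),
      Set.indicator_of_notMem (by simp only [Set.mem_Ioi]; intro hc; exact h (by linarith))]

/-- Key bound for the model integral. -/
lemma aux_J_le {s : ℝ} (hs : 0 < s) :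
    ∫ u in Set.Ioi (0:ℝ), Real.exp (-s * (Real.cosh u - 1)) ≤
      2 + |Real.log (1 - Real.exp (-s))| := by
  have he1 : Real.exp (-s) < 1 := Real.exp_lt_one_iff.mpr (by linarith)
  have h01 : (0:ℝ) < 1 - Real.exp (-s) := by linarith
  have habs : |Real.log (1 - Real.exp (-s))| = -Real.log (1 - Real.exp (-s)) :=
    abs_of_nonpos (Real.log_nonpos h01.le (by have := Real.exp_pos (-s); linarith))
  have hJ0 : IntegrableOn (fun u => Real.exp (-s * (Real.cosh u - 1))) (Set.Ioi (0:ℝ)) := by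
    have := aux_integrable hs 0
    simpa using this
  rcases le_or_gt (1/2 : ℝ) s with hs2 | hs2
  · -- large s : Gaussian bound
    have hgauss : Integrable (fun u : ℝ => Real.exp (-(s/2) * u ^ 2)) :=
      integrable_exp_neg_mul_sq (by linarith)
    have hmono : ∫ u in Set.Ioi (0:ℝ), Real.exp (-s * (Real.cosh u - 1)) ≤
        ∫ u in Set.Ioi (0:ℝ), Real.exp (-(s/2) * u ^ 2) := by
      apply integral_mono_of_nonneg
      · filter_upwards with u; positivity
      · exact hgauss.integrableOn
      · filter_upwards [ae_restrict_mem measurableSet_Ioi] with u hu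
        apply Real.exp_le_exp.mpr
        have hu0 : (0:ℝ) ≤ u := (Set.mem_Ioi.mp hu).le
        nlinarith [aux_cosh_quad hu0]
    rw [integral_gaussian_Ioi] at hmono
    have hsq : Real.sqrt (π / (s/2)) ≤ 4 := by
      have h16 : π / (s/2) ≤ 16 := by
        rw [div_le_iff₀ (by linarith)]
        nlinarith [Real.pi_le_four]
      calc Real.sqrt (π / (s/2)) ≤ Real.sqrt 16 := Real.sqrt_le_sqrt h16
        _ = 4 := by
            rw [show (16:ℝ) = 4 ^ 2 by norm_num, Real.sqrt_sq (by norm_num)]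
    have := abs_nonneg (Real.log (1 - Real.exp (-s)))
    linarith
  · -- small s : split at U = log (2/s)
    set U := Real.log (2 / s) with hUdef
    have h2s : (1:ℝ) < 2 / s := by
      rw [lt_div_iff₀ hs]; linarith
    have hU : 0 < U := Real.log_pos h2s
    have hexpU : Real.exp U = 2 / s := Real.exp_log (by positivity)
    have h1s : (0:ℝ) < 1 - s := by linarith
    -- split the integral
    have hsplit : ∫ u in Set.Ioi (0:ℝ), Real.exp (-s * (Real.cosh u - 1)) =
        (∫ u in Set.Ioc (0:ℝ) U, Real.exp (-s * (Real.cosh u - 1))) +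
        ∫ u in Set.Ioi U, Real.exp (-s * (Real.cosh u - 1)) := by
      rw [← setIntegral_union (Set.Ioc_disjoint_Ioi le_rfl) measurableSet_Ioi
        (hJ0.mono_set Set.Ioc_subset_Ioi_self) (hJ0.mono_set (Set.Ioi_subset_Ioi hU.le)),
        Set.Ioc_union_Ioi_eq_Ioi hU.le]
    -- first piece ≤ U
    have hpiece1 : ∫ u in Set.Ioc (0:ℝ) U, Real.exp (-s * (Real.cosh u - 1)) ≤ U := by
      have : ∫ u in Set.Ioc (0:ℝ) U, Real.exp (-s * (Real.cosh u - 1)) ≤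
          ∫ _u in Set.Ioc (0:ℝ) U, (1:ℝ) := by
        apply integral_mono_of_nonneg
        · filter_upwards with u; positivity
        · exact integrableOn_const measure_Ioc_lt_top.ne
        · filter_upwards with u
          apply Real.exp_le_one_iff.mpr
          nlinarith [Real.one_le_cosh u]
      rw [setIntegral_const, smul_eq_mul, mul_one, Real.volume_real_Ioc_of_le (by linarith)] at this
      linarith
    -- second piece ≤ exp (-(1-s)) / (1-s) ≤ 2 * exp (-(1/2))
    have hpiece2 : ∫ u in Set.Ioi U, Real.exp (-s * (Real.cosh u - 1)) ≤
        Real.exp (-(1-s)) / (1-s) := by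
      have hC : ∫ u in Set.Ioi U, Real.exp (-(1-s)) * Real.exp ((1-s) * U) *
          Real.exp (-((1-s) * u)) = Real.exp (-(1-s)) / (1-s) := by
        rw [integral_const_mul]
        have := integral_comp_mul_left_Ioi (fun y => Real.exp (-y)) U h1s
        simp only [smul_eq_mul] at this
        rw [this, integral_exp_neg_Ioi, Real.exp_neg ((1-s) * U), div_eq_mul_inv]
        field_simp
      rw [← hC]
      apply integral_mono_of_nonneg
      · filter_upwards with u; positivity
      · have h := (exp_neg_integrableOn_Ioi U h1s).const_mul
          (Real.exp (-(1-s)) * Real.exp ((1-s) * U))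
        have he : (fun u => Real.exp (-(1-s)) * Real.exp ((1-s) * U) *
            Real.exp (-(1-s) * u)) = fun u => Real.exp (-(1-s)) * Real.exp ((1-s) * U) *
            Real.exp (-((1-s) * u)) := by
          funext u; rw [neg_mul]
        rwa [he] at h
      · filter_upwards [ae_restrict_mem measurableSet_Ioi] with u hu
        rw [← Real.exp_add, ← Real.exp_add]
        apply Real.exp_le_exp.mpr
        have huU : U ≤ u := (Set.mem_Ioi.mp hu).le
        -- key pointwise estimate
        have hexpu : 2 / s * (1 + (u - U)) ≤ Real.exp u := by
          have h1 : Real.exp u = Real.exp U * Real.exp (u - U) := by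
            rw [← Real.exp_add]; ring_nf
          have h2 : 1 + (u - U) ≤ Real.exp (u - U) := by
            have := Real.add_one_le_exp (u - U); linarith
          rw [h1, hexpU]
          have : (0:ℝ) < 2 / s := by positivity
          nlinarith
        have h2 : 2 * (1 + (u - U)) ≤ Real.exp u * s := by
          rw [div_mul_eq_mul_div, div_le_iff₀ hs] at hexpu
          linarith
        have hch : 1 + (u - U) ≤ s * Real.cosh u := by
          nlinarith [mul_le_mul_of_nonneg_left (aux_cosh_exp u) hs.le]
        nlinarith [mul_nonneg hs.le (sub_nonneg.mpr huU)]
    -- numeric bound: exp (-(1-s)) / (1-s) ≤ 2 * exp (-(1/2:ℝ)) and exp(-(1/2)) ≤ 0.64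
    have hnum1 : Real.exp (-(1-s)) / (1-s) ≤ 2 * Real.exp (-(1/2:ℝ)) := by
      have h1 : Real.exp (-(1-s)) ≤ Real.exp (-(1/2:ℝ)) :=
        Real.exp_le_exp.mpr (by linarith)
      have h2 : 1 / (1-s) ≤ 2 := by
        rw [div_le_iff₀ h1s]; linarith
      have h3 : Real.exp (-(1-s)) / (1-s) = Real.exp (-(1-s)) * (1 / (1-s)) := by ring
      rw [h3]
      have := (Real.exp_pos (-(1-s))).le
      nlinarith [Real.exp_pos (-(1/2:ℝ))]
    have hnum2 : Real.exp (-(1/2:ℝ)) ≤ 0.64 := by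
      have h4 : (1.5625:ℝ) ≤ Real.exp (1/2:ℝ) := by
        have h5 : Real.exp (1/2:ℝ) = Real.exp (1/4:ℝ) ^ 2 := by
          rw [← Real.exp_nat_mul]; norm_num
        have h6 : (1.25:ℝ) ≤ Real.exp (1/4:ℝ) := by
          have := Real.add_one_le_exp (1/4:ℝ); linarith
        rw [h5]; nlinarith [ (Real.exp_pos (1/4:ℝ)).le ]
      have h7 : Real.exp (-(1/2:ℝ)) = (Real.exp (1/2:ℝ))⁻¹ := by
        rw [Real.exp_neg]
      rw [h7]
      rw [inv_le_comm₀ (by positivity) (by norm_num)]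
      calc (0.64:ℝ)⁻¹ = 1.5625 := by norm_num
        _ ≤ Real.exp (1/2:ℝ) := h4
    -- relate U to the log term
    have hUle : U ≤ Real.log 2 - Real.log (1 - Real.exp (-s)) := by
      rw [hUdef, Real.log_div (by norm_num) hs.ne']
      have : Real.log (1 - Real.exp (-s)) ≤ Real.log s := by
        apply Real.log_le_log h01
        have := Real.add_one_le_exp (-s)
        linarith
      linarith
    have hlog2 : Real.log 2 < 0.6931471808 := Real.log_two_lt_d9
    rw [hsplit, habs]
    have : Real.exp (-(1-s)) / (1-s) ≤ 1.28 := by nlinarith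
    linarith

/-- For all `s > 0` and `σ > 0`,
`∫_σ^∞ exp (-s * cosh x) dx ≤ (1 + L s) * exp (-s * cosh σ)`,
where `L s = 1 + |ln (1 - e^{-s})|`. -/
theorem stmt_1 (s σ : ℝ) (hs : 0 < s) (hσ : 0 < σ) :
    ∫ x in Set.Ioi σ, Real.exp (-s * Real.cosh x) ≤
      (1 + (1 + |Real.log (1 - Real.exp (-s))|)) * Real.exp (-s * Real.cosh σ) := by
  have step1 : ∫ x in Set.Ioi σ, Real.exp (-s * Real.cosh x) ≤
      ∫ x in Set.Ioi σ, Real.exp (-s * Real.cosh σ) *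
        Real.exp (-s * (Real.cosh (x - σ) - 1)) := by
    apply integral_mono_of_nonneg
    · filter_upwards with x; positivity
    · exact (aux_integrable hs σ).const_mul _
    · filter_upwards [ae_restrict_mem measurableSet_Ioi] with x hx
      rw [← Real.exp_add]
      apply Real.exp_le_exp.mpr
      have hxσ : (0:ℝ) ≤ x - σ := by simp only [Set.mem_Ioi] at hx; linarith
      have := aux_cosh_shift hσ.le hxσ
      have hx' : σ + (x - σ) = x := by ring
      rw [hx'] at this
      nlinarith
  have step2 : ∫ x in Set.Ioi σ, Real.exp (-s * Real.cosh σ) *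
      Real.exp (-s * (Real.cosh (x - σ) - 1)) =
      Real.exp (-s * Real.cosh σ) *
        ∫ u in Set.Ioi (0:ℝ), Real.exp (-s * (Real.cosh u - 1)) := by
    rw [integral_const_mul, aux_shift_integral (fun u => Real.exp (-s * (Real.cosh u - 1))) σ]
  have step3 := aux_J_le hs
  have hE := (Real.exp_pos (-s * Real.cosh σ)).le
  calc ∫ x in Set.Ioi σ, Real.exp (-s * Real.cosh x)
      ≤ Real.exp (-s * Real.cosh σ) *
        ∫ u in Set.Ioi (0:ℝ), Real.exp (-s * (Real.cosh u - 1)) := by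
        rw [← step2]; exact step1
    _ ≤ Real.exp (-s * Real.cosh σ) * (2 + |Real.log (1 - Real.exp (-s))|) :=
        mul_le_mul_of_nonneg_left step3 hE
    _ = (1 + (1 + |Real.log (1 - Real.exp (-s))|)) * Real.exp (-s * Real.cosh σ) := by ring
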